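/- Let G be an additive abelian group and A an m×n partial matrix over G. If every minimal cycle in A is balanced, then every cycle in A is balanced; hence A is cycle-balanced if and only if every minimal cycle in A is balanced. -/

import Mathlib

/-- `(i, j)` describes a cycle in the partial matrix `A`: writing the index sequence
`(i 0, j 0, i 1, j 1, …, i k, j k, i 0)` (addition of indices is modulo `k + 1`),
the corresponding closed walk in the bipartite graph `H_A` uses only edges of `H_A`
and does not repeat edges. -/
def IsCycleIn {G : Type*} {m n : ℕ} (A : Matrix (Fin m) (Fin n) (Option G))
    {k : ℕ} (i : Fin (k + 1) → Fin m) (j : Fin (k + 1) → Fin n) : Prop :=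
  (∀ r, A (i r) (j r) ≠ none) ∧
  (∀ r, A (i (r + 1)) (j r) ≠ none) ∧
  Function.Injective (fun p : Fin (k + 1) × Bool =>
    if p.2 then (i p.1, j p.1) else (i (p.1 + 1), j p.1))

/-- The cycle `(i, j)` in `A` is balanced: `Σ_r (a_{i_r, j_r} − a_{i_{r+1}, j_r}) = 0`. -/
def IsBalancedCycle {G : Type*} [AddCommGroup G] {m n : ℕ}
    (A : Matrix (Fin m) (Fin n) (Option G))
    {k : ℕ} (i : Fin (k + 1) → Fin m) (j : Fin (k + 1) → Fin n) : Prop :=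
  ∑ r : Fin (k + 1), ((A (i r) (j r)).getD 0 - (A (i (r + 1)) (j r)).getD 0) = 0

/-- A partial matrix is cycle-balanced if every cycle in it is balanced. -/
def CycleBalanced {G : Type*} [AddCommGroup G] {m n : ℕ}
    (A : Matrix (Fin m) (Fin n) (Option G)) : Prop :=
  ∀ (k : ℕ) (i : Fin (k + 1) → Fin m) (j : Fin (k + 1) → Fin n),
    IsCycleIn A i j → IsBalancedCycle A i j

/-- A cycle in `A` is minimal if the subgraph of `H_A` induced by its vertices contains
no cycle on fewer vertices. -/
def IsMinimalCycleIn {G : Type*} {m n : ℕ} (A : Matrix (Fin m) (Fin n) (Option G))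
    {k : ℕ} (i : Fin (k + 1) → Fin m) (j : Fin (k + 1) → Fin n) : Prop :=
  IsCycleIn A i j ∧
  ¬ ∃ (k' : ℕ) (i' : Fin (k' + 1) → Fin m) (j' : Fin (k' + 1) → Fin n),
      IsCycleIn A i' j' ∧ (∀ r, i' r ∈ Set.range i) ∧ (∀ r, j' r ∈ Set.range j) ∧
      (Finset.image i' Finset.univ).card + (Finset.image j' Finset.univ).card <
        (Finset.image i Finset.univ).card + (Finset.image j Finset.univ).card

namespace Stmt11Aux

open Fin.NatCast

set_option linter.unusedSectionVars false
set_option linter.unusedVariables false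
set_option linter.unusedTactic false
set_option maxHeartbeats 1000000

variable {G : Type*} {m n : ℕ}

/-- A closed walk (no edge-injectivity required). -/
def Walk (A : Matrix (Fin m) (Fin n) (Option G)) {k : ℕ}
    (i : Fin (k + 1) → Fin m) (j : Fin (k + 1) → Fin n) : Prop :=
  (∀ r, A (i r) (j r) ≠ none) ∧ (∀ r, A (i (r + 1)) (j r) ≠ none)

lemma natCast_fin {N t : ℕ} (h : t < N + 1) : (t : Fin (N + 1)) = ⟨t, h⟩ :=
  Fin.ext (Fin.val_cast_of_lt h)

lemma cycle_of_walk (A : Matrix (Fin m) (Fin n) (Option G)) {k : ℕ} (hk : 1 ≤ k)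
    {i : Fin (k + 1) → Fin m} {j : Fin (k + 1) → Fin n} (hw : Walk A i j)
    (hi : Function.Injective i) (hj : Function.Injective j) : IsCycleIn A i j := by
  have hone : (1 : Fin (k + 1)) ≠ 0 := by
    intro h
    have := congrArg Fin.val h
    rw [Fin.val_one', Nat.mod_eq_of_lt (by omega)] at this
    exact one_ne_zero this
  refine ⟨hw.1, hw.2, ?_⟩
  rintro ⟨r, br⟩ ⟨s, bs⟩ hpq
  cases br <;> cases bs <;>
    simp only [if_true, if_false, Bool.false_eq_true, Prod.mk.injEq] at hpq
  · have : r = s := hj hpq.2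
    rw [this]
  · exfalso
    have h1 : r + 1 = s := hi hpq.1
    have h2 : r = s := hj hpq.2
    rw [← h2] at h1
    exact hone (by
      have : r + 1 = r + 0 := by rw [add_zero, h1]
      exact add_left_cancel this)
  · exfalso
    have h1 : r = s + 1 := hi hpq.1
    have h2 : r = s := hj hpq.2
    rw [h2] at h1
    exact hone (by
      have : s + 1 = s + 0 := by rw [add_zero, ← h1]
      exact add_left_cancel this)
  · have : r = s := hj hpq.2
    rw [this]

lemma card_le_of_nochord (A : Matrix (Fin m) (Fin n) (Option G)) {k : ℕ}
    {i : Fin (k + 1) → Fin m} {j : Fin (k + 1) → Fin n}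
    {k' : ℕ} {i' : Fin (k' + 1) → Fin m} {j' : Fin (k' + 1) → Fin n}
    (hC' : IsCycleIn A i' j')
    (hri : ∀ r, i' r ∈ Set.range i) (hrj : ∀ r, j' r ∈ Set.range j)
    (hno : ∀ a b, A (i a) (j b) ≠ none → b = a ∨ a = b + 1) :
    (Finset.image i Finset.univ).card + (Finset.image j Finset.univ).card ≤
      (Finset.image i' Finset.univ).card + (Finset.image j' Finset.univ).card := by
  choose f hf using hri
  choose g hg using hrj
  have F1 : ∀ r, g r = f r ∨ f r = g r + 1 := by
    intro r
    exact hno (f r) (g r) (by rw [hf, hg]; exact hC'.1 r)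
  have F2 : ∀ r, g r = f (r + 1) ∨ f (r + 1) = g r + 1 := by
    intro r
    exact hno (f (r + 1)) (g r) (by rw [hf, hg]; exact hC'.2.1 r)
  have E : ∀ r s : Fin (k' + 1), (i' (r + 1), j' r) ≠ (i' s, j' s) := by
    intro r s h
    have h2 := hC'.2.2 (a₁ := (r, false)) (a₂ := (s, true)) (by simpa using h)
    simp at h2
  have F3 : ∀ r, f (r + 1) ≠ f r := by
    intro r heq
    apply E r r
    have : i' (r + 1) = i' r := by rw [← hf, ← hf, heq]
    rw [this]
  have prop_f : ∀ r, g r = f r → g (r + 1) = f (r + 1) := by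
    intro r h0
    have h1 : f (r + 1) = g r + 1 := by
      rcases F2 r with h | h
      · exact absurd (by rw [← h, h0]) (F3 r)
      · exact h
    rcases F1 (r + 1) with h2 | h2
    · exact h2
    · exfalso
      have hgg : g (r + 1) = g r := by
        have : g (r + 1) + 1 = g r + 1 := by rw [← h1, ← h2]
        exact add_right_cancel this
      apply E r (r + 1)
      have : j' (r + 1) = j' r := by rw [← hg, ← hg, hgg]
      rw [this]
  have prop_b : ∀ r, f r = g r + 1 → f (r + 1) = g (r + 1) + 1 := by
    intro r h0
    have h1 : g r = f (r + 1) := by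
      rcases F2 r with h | h
      · exact h
      · exact absurd (by rw [h, ← h0]) (F3 r)
    rcases F1 (r + 1) with h2 | h2
    · exfalso
      apply E r (r + 1)
      have : j' (r + 1) = j' r := by rw [← hg, ← hg, h2, ← h1]
      rw [this]
    · exact h2
  have surj_f_and_g : (∀ a : Fin (k + 1), ∃ r, f r = a) ∧
      (∀ b : Fin (k + 1), ∃ r, g r = b) := by
    rcases F1 0 with hfw | hbw
    · have dir : ∀ t : ℕ, g (t : Fin (k' + 1)) = f (t : Fin (k' + 1)) := by
        intro t
        induction t with
        | zero => exact hfw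
        | succ s ih =>
          have : ((s + 1 : ℕ) : Fin (k' + 1)) = (s : Fin (k' + 1)) + 1 := by
            rw [Nat.cast_add, Nat.cast_one]
          rw [this]
          exact prop_f _ ih
      have dir' : ∀ r, g r = f r := by
        intro r
        have := dir r.1
        rwa [Fin.cast_val_eq_self] at this
      have step : ∀ r, f (r + 1) = f r + 1 := by
        intro r
        rcases F2 r with h | h
        · exact absurd (by rw [← h, dir' r]) (F3 r)
        · rw [h, dir' r]
      have formula : ∀ t : ℕ, f (t : Fin (k' + 1)) = f 0 + (t : Fin (k + 1)) := by
        intro t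
        induction t with
        | zero => simp
        | succ s ih =>
          have e1 : ((s + 1 : ℕ) : Fin (k' + 1)) = (s : Fin (k' + 1)) + 1 := by
            rw [Nat.cast_add, Nat.cast_one]
          have e2 : ((s + 1 : ℕ) : Fin (k + 1)) = (s : Fin (k + 1)) + 1 := by
            rw [Nat.cast_add, Nat.cast_one]
          rw [e1, step, ih, e2, add_assoc]
      constructor
      · intro a
        refine ⟨((a - f 0).1 : Fin (k' + 1)), ?_⟩
        rw [formula, Fin.cast_val_eq_self, add_sub_cancel]
      · intro b
        refine ⟨((b - f 0).1 : Fin (k' + 1)), ?_⟩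
        rw [dir', formula, Fin.cast_val_eq_self, add_sub_cancel]
    · have dir : ∀ t : ℕ, f (t : Fin (k' + 1)) = g (t : Fin (k' + 1)) + 1 := by
        intro t
        induction t with
        | zero => exact hbw
        | succ s ih =>
          have : ((s + 1 : ℕ) : Fin (k' + 1)) = (s : Fin (k' + 1)) + 1 := by
            rw [Nat.cast_add, Nat.cast_one]
          rw [this]
          exact prop_b _ ih
      have dir' : ∀ r, f r = g r + 1 := by
        intro r
        have := dir r.1
        rwa [Fin.cast_val_eq_self] at this
      have step : ∀ r, f (r + 1) = f r - 1 := by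
        intro r
        have h1 : g r = f (r + 1) := by
          rcases F2 r with h | h
          · exact h
          · exact absurd (by rw [h, ← dir' r]) (F3 r)
        rw [← h1, dir' r, add_sub_cancel_right]
      have formula : ∀ t : ℕ, f (t : Fin (k' + 1)) = f 0 - (t : Fin (k + 1)) := by
        intro t
        induction t with
        | zero => simp
        | succ s ih =>
          have e1 : ((s + 1 : ℕ) : Fin (k' + 1)) = (s : Fin (k' + 1)) + 1 := by
            rw [Nat.cast_add, Nat.cast_one]
          have e2 : ((s + 1 : ℕ) : Fin (k + 1)) = (s : Fin (k + 1)) + 1 := by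
            rw [Nat.cast_add, Nat.cast_one]
          rw [e1, step, ih, e2]
          abel
      constructor
      · intro a
        refine ⟨(((f 0 - a).1 : ℕ) : Fin (k' + 1)), ?_⟩
        rw [formula, Fin.cast_val_eq_self, sub_sub_cancel]
      · intro b
        refine ⟨(((f 0 - 1 - b).1 : ℕ) : Fin (k' + 1)), ?_⟩
        have hd := dir' (((f 0 - 1 - b).1 : ℕ) : Fin (k' + 1))
        have h2 : g (((f 0 - 1 - b).1 : ℕ) : Fin (k' + 1))
            = f (((f 0 - 1 - b).1 : ℕ) : Fin (k' + 1)) - 1 := by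
          rw [hd, add_sub_cancel_right]
        rw [h2, formula, Fin.cast_val_eq_self]
        abel
  have hsub_i : Finset.image i Finset.univ ⊆ Finset.image i' Finset.univ := by
    intro x hx
    rw [Finset.mem_image] at hx ⊢
    obtain ⟨a, _, ha⟩ := hx
    obtain ⟨r, hr⟩ := surj_f_and_g.1 a
    exact ⟨r, Finset.mem_univ r, by rw [← hf, hr, ha]⟩
  have hsub_j : Finset.image j Finset.univ ⊆ Finset.image j' Finset.univ := by
    intro x hx
    rw [Finset.mem_image] at hx ⊢
    obtain ⟨b, _, hb⟩ := hx
    obtain ⟨r, hr⟩ := surj_f_and_g.2 b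
    exact ⟨r, Finset.mem_univ r, by rw [← hg, hr, hb]⟩
  have := Finset.card_le_card hsub_i
  have := Finset.card_le_card hsub_j
  omega

section Grp
variable [AddCommGroup G]

def S (A : Matrix (Fin m) (Fin n) (Option G)) {k : ℕ}
    (i : Fin (k + 1) → Fin m) (j : Fin (k + 1) → Fin n) : G :=
  ∑ r : Fin (k + 1), ((A (i r) (j r)).getD 0 - (A (i (r + 1)) (j r)).getD 0)

lemma getD_congr (A : Matrix (Fin m) (Fin n) (Option G)) {a a' : Fin m} {b b' : Fin n}
    (ha : a = a') (hb : b = b') : (A a b).getD 0 = (A a' b').getD 0 := by rw [ha, hb]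

lemma S_eq (A : Matrix (Fin m) (Fin n) (Option G)) {k : ℕ}
    (i : Fin (k + 1) → Fin m) (j : Fin (k + 1) → Fin n) :
    S A i j = ∑ t ∈ Finset.range (k + 1),
      ((A (i (t : Fin (k + 1))) (j (t : Fin (k + 1)))).getD 0
        - (A (i ((t + 1 : ℕ) : Fin (k + 1))) (j (t : Fin (k + 1)))).getD 0) := by
  rw [S, ← Fin.sum_univ_eq_sum_range]
  refine Finset.sum_congr rfl fun r _ => ?_
  have h1 : ((r.val : ℕ) : Fin (k + 1)) = r := Fin.cast_val_eq_self r
  have h2 : ((r.val + 1 : ℕ) : Fin (k + 1)) = r + 1 := by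
    rw [Nat.cast_add, Nat.cast_one, h1]
  rw [h1, h2]

lemma walk_rot (A : Matrix (Fin m) (Fin n) (Option G)) {k : ℕ}
    {i : Fin (k + 1) → Fin m} {j : Fin (k + 1) → Fin n} (h : Walk A i j) (t : Fin (k + 1)) :
    Walk A (fun r => i (r + t)) (fun r => j (r + t)) := by
  refine ⟨fun r => h.1 (r + t), fun r => ?_⟩
  have e : (r + 1) + t = (r + t) + 1 := by rw [add_right_comm]
  simpa [e] using h.2 (r + t)

lemma S_rot (A : Matrix (Fin m) (Fin n) (Option G)) {k : ℕ}
    (i : Fin (k + 1) → Fin m) (j : Fin (k + 1) → Fin n) (t : Fin (k + 1)) :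
    S A (fun r => i (r + t)) (fun r => j (r + t)) = S A i j := by
  rw [S, S]
  refine Fintype.sum_equiv (Equiv.addRight t) _ _ fun r => ?_
  have e : (r + 1) + t = (r + t) + 1 := by rw [add_right_comm]
  simp [e]

lemma sum_split_abstract (pc mc p1 m1 p2 m2 : ℕ → G) (k D : ℕ)
    (hD1 : 1 ≤ D) (hD2 : D + 1 ≤ k) (X : G)
    (h1 : ∀ t < D + 1, p1 t = pc t)
    (h2 : ∀ t < D, m1 t = mc t)
    (h3 : m1 D = X)
    (h4 : p2 0 = X)
    (h5 : ∀ t < k - D, p2 (t + 1) = pc (D + 1 + t))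
    (h6 : ∀ t < k - D, m2 t = mc (D + t))
    (h7 : m2 (k - D) = mc k) :
    ∑ t ∈ Finset.range (k + 1), (pc t - mc t)
      = ∑ t ∈ Finset.range (D + 1), (p1 t - m1 t)
        + ∑ t ∈ Finset.range (k - D + 1), (p2 t - m2 t) := by
  rw [Finset.sum_sub_distrib, Finset.sum_sub_distrib, Finset.sum_sub_distrib]
  have E1 : ∑ t ∈ Finset.range (D + 1), p1 t = ∑ t ∈ Finset.range (D + 1), pc t :=
    Finset.sum_congr rfl fun t ht => h1 t (Finset.mem_range.1 ht)
  have E2 : ∑ t ∈ Finset.range (D + 1), m1 t = (∑ t ∈ Finset.range D, mc t) + X := by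
    rw [Finset.sum_range_succ, h3]
    congr 1
    exact Finset.sum_congr rfl fun t ht => h2 t (Finset.mem_range.1 ht)
  have E3 : ∑ t ∈ Finset.range (k - D + 1), p2 t
      = (∑ t ∈ Finset.range (k - D), pc (D + 1 + t)) + X := by
    rw [Finset.sum_range_succ', h4]
    congr 1
    exact Finset.sum_congr rfl fun t ht => h5 t (Finset.mem_range.1 ht)
  have E4 : ∑ t ∈ Finset.range (k - D + 1), m2 t
      = (∑ t ∈ Finset.range (k - D), mc (D + t)) + mc k := by
    rw [Finset.sum_range_succ, h7]
    congr 1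
    exact Finset.sum_congr rfl fun t ht => h6 t (Finset.mem_range.1 ht)
  have E5 : ∑ t ∈ Finset.range (k + 1), pc t
      = ∑ t ∈ Finset.range (D + 1), pc t + ∑ t ∈ Finset.range (k - D), pc (D + 1 + t) := by
    have := Finset.sum_range_add pc (D + 1) (k - D)
    rwa [show D + 1 + (k - D) = k + 1 by omega] at this
  have E6 : ∑ t ∈ Finset.range (k + 1), mc t
      = ((∑ t ∈ Finset.range D, mc t) + ∑ t ∈ Finset.range (k - D), mc (D + t)) + mc k := by
    rw [Finset.sum_range_succ]
    congr 1
    have := Finset.sum_range_add mc D (k - D)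
    rwa [show D + (k - D) = k by omega] at this
  rw [E1, E2, E3, E4, E5, E6]
  abel

lemma split_walk (A : Matrix (Fin m) (Fin n) (Option G)) {k D : ℕ}
    (hD1 : 1 ≤ D) (hD2 : D + 1 ≤ k) {i : Fin (k + 1) → Fin m} {j : Fin (k + 1) → Fin n}
    (hw : Walk A i j) (hx : A (i 0) (j ⟨D, by omega⟩) ≠ none) :
    ∃ (i1 : Fin (D + 1) → Fin m) (j1 : Fin (D + 1) → Fin n)
      (i2 : Fin (k - D + 1) → Fin m) (j2 : Fin (k - D + 1) → Fin n),
      Walk A i1 j1 ∧ Walk A i2 j2 ∧ S A i j = S A i1 j1 + S A i2 j2 := by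
  refine ⟨fun r => i ⟨r.1, by have := r.2; omega⟩, fun r => j ⟨r.1, by have := r.2; omega⟩,
      fun r => if h : r.1 = 0 then i 0 else i ⟨D + r.1, by have := r.2; omega⟩,
      fun r => j ⟨D + r.1, by have := r.2; omega⟩, ⟨?_, ?_⟩, ⟨?_, ?_⟩, ?_⟩
  · intro r
    exact hw.1 _
  · intro r
    by_cases hr : r = Fin.last D
    · have h1 : (r + 1).1 = 0 := by subst hr; simp
      simp only [h1]
      have : (⟨r.1, by have := r.2; omega⟩ : Fin (k + 1)) = ⟨D, by omega⟩ := by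
        subst hr; rfl
      rw [this]
      exact hx
    · have hrD : r.1 < D := by
        have h2 := r.2
        rcases Nat.lt_or_ge r.1 D with h | h
        · exact h
        · exact absurd (Fin.ext (by omega : r.1 = D)) hr
      have h1 : (r + 1).1 = r.1 + 1 := by rw [Fin.val_add_one, if_neg hr]
      have := hw.2 ⟨r.1, by omega⟩
      have h2 : ((⟨r.1, by omega⟩ : Fin (k + 1)) + 1) = ⟨r.1 + 1, by omega⟩ := by
        apply Fin.ext
        rw [Fin.val_add_one, if_neg]
        intro hc
        have := congrArg Fin.val hc
        simp at this
        omega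
      rw [h2] at this
      convert this using 3
      apply Fin.ext
      simp [h1]
  · intro r
    by_cases h0 : r.1 = 0
    · simp only [dif_pos h0]
      have : (⟨D + r.1, by have := r.2; omega⟩ : Fin (k + 1)) = ⟨D, by omega⟩ := by
        apply Fin.ext; simp [h0]
      rw [this]
      exact hx
    · simp only [dif_neg h0]
      exact hw.1 _
  · intro r
    by_cases hr : r = Fin.last (k - D)
    · have h1 : (r + 1).1 = 0 := by subst hr; simp
      simp only [h1, dif_pos rfl]
      have hD : (⟨D + r.1, by have := r.2; omega⟩ : Fin (k + 1)) = ⟨k, by omega⟩ := by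
        apply Fin.ext; subst hr; simp [Fin.last]; omega
      rw [hD]
      have := hw.2 ⟨k, by omega⟩
      have h2 : ((⟨k, by omega⟩ : Fin (k + 1)) + 1) = 0 := by
        apply Fin.ext
        simp [Fin.val_add_one, Fin.last]
      rwa [h2] at this
    · have hrD : r.1 < k - D := by
        have h2 := r.2
        rcases Nat.lt_or_ge r.1 (k - D) with h | h
        · exact h
        · exact absurd (Fin.ext (by omega : r.1 = k - D)) hr
      have h1 : (r + 1).1 = r.1 + 1 := by rw [Fin.val_add_one, if_neg hr]
      simp only [h1, dif_neg (show ¬ r.1 + 1 = 0 by omega)]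
      have := hw.2 ⟨D + r.1, by omega⟩
      have h2 : ((⟨D + r.1, by omega⟩ : Fin (k + 1)) + 1) = ⟨D + (r.1 + 1), by omega⟩ := by
        apply Fin.ext
        rw [Fin.val_add_one, if_neg]
        · simp only [Fin.val_mk]
          omega
        intro hc
        have := congrArg Fin.val hc
        simp [Fin.last] at this
        omega
      rw [h2] at this
      exact this
  · rw [S_eq, S_eq, S_eq]
    exact sum_split_abstract _ _ _ _ _ _ k D hD1 hD2 ((A (i 0) (j ⟨D, by omega⟩)).getD 0)
      (by intro t ht
          rw [natCast_fin ht, natCast_fin (show t < k + 1 by omega)])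
      (by intro t ht
          rw [natCast_fin (show t < D + 1 by omega), natCast_fin (show t + 1 < D + 1 by omega),
            natCast_fin (show t < k + 1 by omega), natCast_fin (show t + 1 < k + 1 by omega)])
      (by rw [natCast_fin (show D < D + 1 by omega),
            show ((D + 1 : ℕ) : Fin (D + 1)) = 0 by rw [Fin.natCast_self]]
          rfl)
      (by rw [show ((0 : ℕ) : Fin (k - D + 1)) = 0 from rfl]; rfl)
      (by intro t ht
          rw [natCast_fin (show t + 1 < k - D + 1 by omega),
            natCast_fin (show D + 1 + t < k + 1 by omega)]
          simp only [dif_neg (show ¬ t + 1 = 0 by omega)]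
          exact getD_congr A (congrArg i (Fin.ext (by simp only [Fin.val_mk]; try omega)))
            (congrArg j (Fin.ext (by simp only [Fin.val_mk]; try omega))))
      (by intro t ht
          rw [natCast_fin (show t < k - D + 1 by omega),
            natCast_fin (show t + 1 < k - D + 1 by omega),
            natCast_fin (show D + t < k + 1 by omega),
            natCast_fin (show D + t + 1 < k + 1 by omega)]
          simp only [dif_neg (show ¬ t + 1 = 0 by omega)]
          exact getD_congr A (congrArg i (Fin.ext (by simp only [Fin.val_mk]; try omega)))
            (congrArg j (Fin.ext (by simp only [Fin.val_mk]; try omega))))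
      (by rw [natCast_fin (show k - D < k - D + 1 by omega),
            show ((k - D + 1 : ℕ) : Fin (k - D + 1)) = 0 by rw [Fin.natCast_self],
            natCast_fin (show k < k + 1 by omega),
            show ((k + 1 : ℕ) : Fin (k + 1)) = 0 by rw [Fin.natCast_self]]
          simp only [Fin.isValue, Fin.val_zero, dif_pos]
          exact getD_congr A rfl (congrArg j (Fin.ext (by simp only [Fin.val_mk]; try omega))))

lemma sum_drop_abstract (pc mc p' m' : ℕ → G) (k : ℕ) (hk : 1 ≤ k) (Y : G)
    (h1 : ∀ t < k, p' t = pc (t + 1))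
    (h2 : ∀ t < k - 1, m' t = mc (t + 1))
    (h3 : m' (k - 1) = Y)
    (h4 : pc 0 + Y = mc 0 + mc k) :
    ∑ t ∈ Finset.range (k + 1), (pc t - mc t)
      = ∑ t ∈ Finset.range (k - 1 + 1), (p' t - m' t) := by
  rw [show k - 1 + 1 = k by omega]
  rw [Finset.sum_sub_distrib, Finset.sum_sub_distrib]
  have E1 : ∑ t ∈ Finset.range k, p' t = ∑ t ∈ Finset.range k, pc (t + 1) :=
    Finset.sum_congr rfl fun t ht => h1 t (Finset.mem_range.1 ht)
  have E2 : ∑ t ∈ Finset.range k, m' t = (∑ t ∈ Finset.range (k - 1), mc (t + 1)) + Y := by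
    rw [show k = (k - 1) + 1 by omega, Finset.sum_range_succ]
    rw [show k - 1 + 1 - 1 = k - 1 by omega, h3]
    congr 1
    exact Finset.sum_congr rfl fun t ht => h2 t (by have := Finset.mem_range.1 ht; omega)
  have E3 : ∑ t ∈ Finset.range (k + 1), pc t = pc 0 + ∑ t ∈ Finset.range k, pc (t + 1) := by
    rw [Finset.sum_range_succ', add_comm]
  have E4 : ∑ t ∈ Finset.range (k + 1), mc t
      = mc 0 + ((∑ t ∈ Finset.range (k - 1), mc (t + 1)) + mc k) := by
    rw [Finset.sum_range_succ]
    conv_lhs => rw [show k = (k - 1) + 1 by omega, Finset.sum_range_succ']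
    rw [show k - 1 + 1 = k by omega]
    abel
  rw [E1, E2, E3, E4]
  calc pc 0 + ∑ t ∈ Finset.range k, pc (t + 1)
        - (mc 0 + ((∑ t ∈ Finset.range (k - 1), mc (t + 1)) + mc k))
      = ∑ t ∈ Finset.range k, pc (t + 1) - ((∑ t ∈ Finset.range (k - 1), mc (t + 1)) + Y)
        + ((pc 0 + Y) - (mc 0 + mc k)) := by abel
    _ = _ := by rw [h4, sub_self, add_zero]

lemma drop_walk (A : Matrix (Fin m) (Fin n) (Option G)) {k : ℕ} (hk : 1 ≤ k)
    {i : Fin (k + 1) → Fin m} {j : Fin (k + 1) → Fin n} (hw : Walk A i j)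
    (hd : i 1 = i 0 ∨ j (Fin.last k) = j 0) :
    ∃ (i' : Fin (k - 1 + 1) → Fin m) (j' : Fin (k - 1 + 1) → Fin n),
      Walk A i' j' ∧ S A i j = S A i' j' := by
  obtain ⟨K, rfl⟩ : ∃ K, k = K + 1 := ⟨k - 1, by omega⟩
  show ∃ (i' : Fin (K + 1) → Fin m) (j' : Fin (K + 1) → Fin n),
      Walk A i' j' ∧ S A i j = S A i' j'
  refine ⟨fun r => i r.succ, fun r => j r.succ, ⟨?_, ?_⟩, ?_⟩
  · intro r
    exact hw.1 r.succ
  · intro r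
    by_cases hr : r = Fin.last K
    · subst hr
      have h1 : (Fin.last K + 1) = 0 := Fin.last_add_one K
      have h2 : ((0 : Fin (K + 1)).succ) = 1 := Fin.succ_zero_eq_one
      have h3 : (Fin.last K).succ = Fin.last (K + 1) := Fin.succ_last K
      beta_reduce
      rw [h1, h2, h3]
      rcases hd with hd | hd
      · rw [hd]
        have := hw.2 (Fin.last (K + 1))
        rwa [Fin.last_add_one] at this
      · rw [hd]
        have := hw.2 0
        rwa [zero_add] at this
    · have h1 : (r + 1).succ = r.succ + 1 := by
        apply Fin.ext
        have hv1 : (r + 1).1 = r.1 + 1 := by rw [Fin.val_add_one, if_neg hr]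
        have hv2 : (r.succ + 1).1 = r.succ.1 + 1 := by
          rw [Fin.val_add_one, if_neg]
          intro hc
          have := congrArg Fin.val hc
          simp only [Fin.val_succ, Fin.val_last] at this
          exact hr (Fin.ext (by simp only [Fin.val_last]; have h2 := r.2; omega))
        rw [Fin.val_succ, hv1, hv2, Fin.val_succ]
      beta_reduce
      rw [h1]
      exact hw.2 r.succ
  · rw [S_eq, S_eq]
    exact sum_drop_abstract _ _ _ _ (K + 1) (by omega)
      ((A (i 1) (j (Fin.last (K + 1)))).getD 0)
      (by intro t ht
          beta_reduce
          rw [natCast_fin (show t < K + 1 by omega), natCast_fin (show t + 1 < K + 2 by omega)]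
          exact getD_congr A (congrArg i (Fin.ext (by simp [Fin.val_succ, Fin.val_mk])))
            (congrArg j (Fin.ext (by simp [Fin.val_succ, Fin.val_mk]))))
      (by intro t ht
          beta_reduce
          rw [natCast_fin (show t < K + 1 by omega),
            natCast_fin (show t + 1 < K + 1 by omega),
            natCast_fin (show t + 1 < K + 2 by omega),
            natCast_fin (show t + 1 + 1 < K + 2 by omega)]
          exact getD_congr A (congrArg i (Fin.ext (by simp [Fin.val_succ, Fin.val_mk])))
            (congrArg j (Fin.ext (by simp [Fin.val_succ, Fin.val_mk]))))
      (by beta_reduce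
          rw [show (K + 1 - 1) = K by omega,
            show ((K + 1 : ℕ) : Fin (K + 1)) = 0 by rw [Fin.natCast_self],
            natCast_fin (show K < K + 1 by omega)]
          exact getD_congr A (congrArg i (by rw [Fin.succ_zero_eq_one]))
            (congrArg j (Fin.ext (by simp [Fin.val_succ, Fin.val_mk, Fin.val_last]))))
      (by beta_reduce
          rw [show ((0 : ℕ) : Fin (K + 2)) = 0 from rfl,
            show ((0 + 1 : ℕ) : Fin (K + 2)) = 1 by rw [Nat.zero_add, Nat.cast_one],
            natCast_fin (show K + 1 < K + 2 by omega),
            show ((K + 1 + 1 : ℕ) : Fin (K + 2)) = 0 by rw [Fin.natCast_self],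
            show (⟨K + 1, by omega⟩ : Fin (K + 2)) = Fin.last (K + 1) from rfl]
          rcases hd with hd | hd
          · rw [hd]
          · rw [hd]
            abel)

lemma master (A : Matrix (Fin m) (Fin n) (Option G))
    (H : ∀ (k : ℕ) (i : Fin (k + 1) → Fin m) (j : Fin (k + 1) → Fin n),
      IsMinimalCycleIn A i j → IsBalancedCycle A i j) :
    ∀ (k : ℕ) (i : Fin (k + 1) → Fin m) (j : Fin (k + 1) → Fin n),
      Walk A i j → S A i j = 0 := by
  intro k
  induction k using Nat.strong_induction_on with
  | _ k IH =>
  intro i j hw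
  rcases Nat.eq_zero_or_pos k with hk0 | hkpos
  · subst hk0
    rw [S, Fin.sum_univ_one]
    have h0 : ((0 : Fin 1) + 1) = 0 := Subsingleton.elim _ _
    rw [h0, sub_self]
  · by_cases hinj_i : Function.Injective i
    · by_cases hinj_j : Function.Injective j
      · -- genuine cycle
        have hcyc : IsCycleIn A i j := cycle_of_walk A hkpos hw hinj_i hinj_j
        by_cases hmin : IsMinimalCycleIn A i j
        · exact H k i j hmin
        · have hsm : ∃ (k' : ℕ) (i' : Fin (k' + 1) → Fin m) (j' : Fin (k' + 1) → Fin n),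
              IsCycleIn A i' j' ∧ (∀ r, i' r ∈ Set.range i) ∧ (∀ r, j' r ∈ Set.range j) ∧
              (Finset.image i' Finset.univ).card + (Finset.image j' Finset.univ).card <
                (Finset.image i Finset.univ).card + (Finset.image j Finset.univ).card := by
            by_contra hno
            exact hmin ⟨hcyc, hno⟩
          have hchord : ∃ a b, A (i a) (j b) ≠ none ∧ ¬(b = a ∨ a = b + 1) := by
            by_contra hnc
            push_neg at hnc
            obtain ⟨k', i', j', hC', hri, hrj, hlt⟩ := hsm
            exact absurd hlt (not_lt.2 (card_le_of_nochord A hC' hri hrj (by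
              intro a b hab
              exact hnc a b hab)))
          obtain ⟨a, b, hne_chord, hnotor⟩ := hchord
          push_neg at hnotor
          obtain ⟨hba1, hba2⟩ := hnotor
          have hd1 : 1 ≤ (b - a).1 := by
            have hd0 : (b - a) ≠ 0 := sub_ne_zero_of_ne hba1
            have : (b - a).1 ≠ 0 := fun h => hd0 (Fin.ext h)
            omega
          have hdk : (b - a).1 + 1 ≤ k := by
            have hlt := (b - a).2
            rcases Nat.lt_or_ge ((b - a).1) k with h | h
            · omega
            · exfalso
              have hDk : (b - a).1 = k := by omega
              have hlast : b - a = Fin.last k := Fin.ext hDk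
              have hb : b = (b - a) + a := (sub_add_cancel b a).symm
              have : a = b + 1 := by
                rw [hb, hlast]
                rw [add_comm (Fin.last k) a, add_assoc, Fin.last_add_one, add_zero]
              exact hba2 this
          have hw' := walk_rot A hw a
          have hx : A ((fun r : Fin (k + 1) => i (r + a)) 0)
              ((fun r : Fin (k + 1) => j (r + a)) ⟨(b - a).1, by omega⟩) ≠ none := by
            show A (i (0 + a)) (j ((⟨(b - a).1, by omega⟩ : Fin (k + 1)) + a)) ≠ none
            have e2 : (⟨(b - a).1, by omega⟩ : Fin (k + 1)) + a = b := by
              have h0 : (⟨(b - a).1, by omega⟩ : Fin (k + 1)) = b - a := rfl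
              rw [h0, sub_add_cancel]
            rw [zero_add, e2]
            exact hne_chord
          obtain ⟨i1, j1, i2, j2, hw1, hw2, hsum⟩ := split_walk A hd1 hdk hw' hx
          have z1 := IH (b - a).1 (by omega) i1 j1 hw1
          have z2 := IH (k - (b - a).1) (by omega) i2 j2 hw2
          rw [← S_rot A i j a, hsum, z1, z2, add_zero]
      · -- repeated column
        obtain ⟨a, b, hab, hne⟩ := Function.not_injective_iff.mp hinj_j
        have hd0 : (b - a) ≠ 0 := sub_ne_zero_of_ne (Ne.symm hne)
        have hd1 : 1 ≤ (b - a).1 := by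
          have : (b - a).1 ≠ 0 := fun h => hd0 (Fin.ext h)
          omega
        by_cases hdk : (b - a).1 + 1 ≤ k
        · have hw' := walk_rot A hw a
          have hx : A ((fun r : Fin (k + 1) => i (r + a)) 0)
              ((fun r : Fin (k + 1) => j (r + a)) ⟨(b - a).1, by omega⟩) ≠ none := by
            show A (i (0 + a)) (j ((⟨(b - a).1, by omega⟩ : Fin (k + 1)) + a)) ≠ none
            have e2 : (⟨(b - a).1, by omega⟩ : Fin (k + 1)) + a = b := by
              have h0 : (⟨(b - a).1, by omega⟩ : Fin (k + 1)) = b - a := rfl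
              rw [h0, sub_add_cancel]
            rw [zero_add, e2, ← hab]
            exact hw.1 a
          obtain ⟨i1, j1, i2, j2, hw1, hw2, hsum⟩ := split_walk A hd1 hdk hw' hx
          have z1 := IH (b - a).1 (by omega) i1 j1 hw1
          have z2 := IH (k - (b - a).1) (by omega) i2 j2 hw2
          rw [← S_rot A i j a, hsum, z1, z2, add_zero]
        · -- (b - a).1 = k
          have hDk : (b - a).1 = k := by
            have := (b - a).2
            omega
          have hlast : b - a = Fin.last k := Fin.ext hDk
          have hw' := walk_rot A hw a
          have hd : (fun r : Fin (k + 1) => i (r + a)) 1 = (fun r : Fin (k + 1) => i (r + a)) 0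
              ∨ (fun r : Fin (k + 1) => j (r + a)) (Fin.last k)
                = (fun r : Fin (k + 1) => j (r + a)) 0 := by
            right
            show j (Fin.last k + a) = j (0 + a)
            have e1 : Fin.last k + a = b := by
              rw [← hlast, sub_add_cancel]
            rw [e1, zero_add]
            exact hab.symm
          obtain ⟨i', j', hw'', hsum⟩ := drop_walk A hkpos hw' hd
          have z := IH (k - 1) (by omega) i' j' hw''
          rw [← S_rot A i j a, hsum, z]
    · -- repeated row
      obtain ⟨a, b, hab, hne⟩ := Function.not_injective_iff.mp hinj_i
      have hd0 : (b - a) ≠ 0 := sub_ne_zero_of_ne (Ne.symm hne)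
      have hd1 : 1 ≤ (b - a).1 := by
        have : (b - a).1 ≠ 0 := fun h => hd0 (Fin.ext h)
        omega
      by_cases hdk : (b - a).1 + 1 ≤ k
      · have hw' := walk_rot A hw a
        have hx : A ((fun r : Fin (k + 1) => i (r + a)) 0)
            ((fun r : Fin (k + 1) => j (r + a)) ⟨(b - a).1, by omega⟩) ≠ none := by
          show A (i (0 + a)) (j ((⟨(b - a).1, by omega⟩ : Fin (k + 1)) + a)) ≠ none
          have e2 : (⟨(b - a).1, by omega⟩ : Fin (k + 1)) + a = b := by
            have h0 : (⟨(b - a).1, by omega⟩ : Fin (k + 1)) = b - a := rfl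
            rw [h0, sub_add_cancel]
          rw [zero_add, e2, hab]
          exact hw.1 b
        obtain ⟨i1, j1, i2, j2, hw1, hw2, hsum⟩ := split_walk A hd1 hdk hw' hx
        have z1 := IH (b - a).1 (by omega) i1 j1 hw1
        have z2 := IH (k - (b - a).1) (by omega) i2 j2 hw2
        rw [← S_rot A i j a, hsum, z1, z2, add_zero]
      · -- (b - a).1 = k, so a = b + 1 : adjacent repeat, rotate by b and drop
        have hDk : (b - a).1 = k := by
          have := (b - a).2
          omega
        have hlast : b - a = Fin.last k := Fin.ext hDk
        have hba : a = b + 1 := by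
          have hb : b = (b - a) + a := (sub_add_cancel b a).symm
          rw [hb, hlast, add_comm (Fin.last k) a, add_assoc, Fin.last_add_one, add_zero]
        have hw' := walk_rot A hw b
        have hd : (fun r : Fin (k + 1) => i (r + b)) 1 = (fun r : Fin (k + 1) => i (r + b)) 0
            ∨ (fun r : Fin (k + 1) => j (r + b)) (Fin.last k)
              = (fun r : Fin (k + 1) => j (r + b)) 0 := by
          left
          show i (1 + b) = i (0 + b)
          rw [zero_add, add_comm 1 b, ← hba]
          exact hab
        obtain ⟨i', j', hw'', hsum⟩ := drop_walk A hkpos hw' hd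
        have z := IH (k - 1) (by omega) i' j' hw''
        rw [← S_rot A i j b, hsum, z]

lemma main (A : Matrix (Fin m) (Fin n) (Option G))
    (H : ∀ (k : ℕ) (i : Fin (k + 1) → Fin m) (j : Fin (k + 1) → Fin n),
      IsMinimalCycleIn A i j → IsBalancedCycle A i j) : CycleBalanced A := by
  intro k i j hcyc
  show S A i j = 0
  exact master A H k i j ⟨hcyc.1, hcyc.2.1⟩

end Grp

end Stmt11Aux

theorem stmt11 {G : Type*} [AddCommGroup G] {m n : ℕ}
    (A : Matrix (Fin m) (Fin n) (Option G)) :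
    ((∀ (k : ℕ) (i : Fin (k + 1) → Fin m) (j : Fin (k + 1) → Fin n),
        IsMinimalCycleIn A i j → IsBalancedCycle A i j) → CycleBalanced A) ∧
      (CycleBalanced A ↔
        ∀ (k : ℕ) (i : Fin (k + 1) → Fin m) (j : Fin (k + 1) → Fin n),
          IsMinimalCycleIn A i j → IsBalancedCycle A i j) := by
  refine ⟨Stmt11Aux.main A, ⟨fun h k i j hmin => h k i j hmin.1, Stmt11Aux.main A⟩⟩
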